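/- Let D be a noncommutative division ring which is finite-dimensional as a ℚ-vector space, and let 𝒪 be an order in D, i.e. a subring of D which is finitely generated as a ℤ-module and satisfies 𝒪 ⊗_ℤ ℚ = D. Let 𝔞 ⊆ 𝒪 be the two-sided ideal of 𝒪 generated by all commutators xy − yx with x, y ∈ 𝒪. Then 𝔞 ≠ 0 and 𝔞 has finite index in 𝒪; more precisely, there exists an integer N ≥ 1 with N·𝒪 ⊆ 𝔞. -/

import Mathlib

/-- **Key step in the proof of Lemma 3(2) of Ruppert, "Torsion points of abelian
varieties in abelian extensions".** Let `D` be a noncommutative division ring of finite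
dimension over `ℚ` and let `𝒪` be an order in `D`. Then the two-sided ideal `𝔞` of `𝒪`
generated by all commutators `x * y - y * x` is nonzero and of finite index; more
precisely, there is an integer `N ≥ 1` with `N • 𝒪 ⊆ 𝔞`. -/
theorem commutator_ideal_of_order_ne_bot_and_finite_index
    (D : Type*) [DivisionRing D] [Algebra ℚ D] [FiniteDimensional ℚ D]
    (hnc : ∃ x y : D, x * y ≠ y * x)
    (𝒪 : Subring D) (hfg : Module.Finite ℤ 𝒪)
    (hspan : Submodule.span ℚ (𝒪 : Set D) = ⊤)
    (𝔞 : TwoSidedIdeal 𝒪)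
    (h𝔞 : 𝔞 = TwoSidedIdeal.span {z : 𝒪 | ∃ x y : 𝒪, z = x * y - y * x}) :
    𝔞 ≠ ⊥ ∧ Finite (𝒪 ⧸ TwoSidedIdeal.asIdeal 𝔞) ∧
      ∃ N : ℤ, 1 ≤ N ∧ ∀ x : 𝒪, N • x ∈ 𝔞 := by
  classical
  -- Step 1: there exist x y ∈ 𝒪 with x*y ≠ y*x.
  have hexists : ∃ x y : 𝒪, (x : D) * y ≠ (y : D) * x := by
    by_contra hcomm
    push_neg at hcomm
    obtain ⟨x, y, hxy⟩ := hnc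
    apply hxy
    -- the centralizer construction
    have key : ∀ c : D, (∀ a : 𝒪, (a : D) * c = c * a) → ∀ d : D, d * c = c * d := by
      intro c hc d
      have hd : d ∈ Submodule.span ℚ (𝒪 : Set D) := by rw [hspan]; trivial
      induction hd using Submodule.span_induction with
      | mem a ha => exact hc ⟨a, ha⟩
      | zero => simp
      | add a b _ _ ha hb => rw [add_mul, mul_add, ha, hb]
      | smul q a _ ha => rw [smul_mul_assoc, mul_smul_comm, ha]
    have key2 : ∀ c : D, ∀ a : 𝒪, (a : D) * c = c * a := by
      intro c a
      have hc : c ∈ Submodule.span ℚ (𝒪 : Set D) := by rw [hspan]; trivial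
      induction hc using Submodule.span_induction with
      | mem b hb => exact hcomm a ⟨b, hb⟩
      | zero => simp
      | add b b' _ _ hb hb' => rw [mul_add, add_mul, hb, hb']
      | smul q b _ hb => rw [mul_smul_comm, smul_mul_assoc, hb]
    exact key y (fun a => key2 y a) x
  obtain ⟨x₀, y₀, hx₀⟩ := hexists
  set c : 𝒪 := x₀ * y₀ - y₀ * x₀ with hc
  have hcne : c ≠ 0 := by
    intro h
    apply hx₀
    have : (x₀ * y₀ : 𝒪) = y₀ * x₀ := by rwa [sub_eq_zero] at h
    exact_mod_cast congrArg (Subtype.val) this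
  have hc𝔞 : c ∈ 𝔞 := by
    rw [h𝔞]
    exact TwoSidedIdeal.subset_span ⟨x₀, y₀, rfl⟩
  -- Step 2: denominators. Every d ∈ D has n • d ∈ 𝒪 for some n ≥ 1.
  have hdenom : ∀ d : D, ∃ n : ℤ, 0 < n ∧ (n : ℤ) • d ∈ 𝒪 := by
    intro d
    have hd : d ∈ Submodule.span ℚ (𝒪 : Set D) := by rw [hspan]; trivial
    induction hd using Submodule.span_induction with
    | mem a ha => exact ⟨1, one_pos, by simpa using ha⟩
    | zero => exact ⟨1, one_pos, by simpa using zero_mem 𝒪⟩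
    | add a b _ _ ha hb =>
      obtain ⟨n, hn, hna⟩ := ha
      obtain ⟨m, hm, hmb⟩ := hb
      refine ⟨n * m, mul_pos hn hm, ?_⟩
      have : (n * m : ℤ) • (a + b) = m • (n • a) + n • (m • b) := by
        rw [smul_add]
        rw [smul_smul, smul_smul]
        ring_nf
      rw [this]
      exact add_mem (zsmul_mem hna m) (zsmul_mem hmb n)
    | smul q a _ ha =>
      obtain ⟨n, hn, hna⟩ := ha
      refine ⟨n * q.den, mul_pos hn (by exact_mod_cast q.pos), ?_⟩
      have hz : ∀ (m : ℤ) (v : D), m • v = (m : ℚ) • v :=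
        fun m v => (Int.cast_smul_eq_zsmul ℚ m v).symm
      have hdq : ((q.den : ℚ)) * q = (q.num : ℚ) := by
        rw [mul_comm]
        rw [Rat.mul_den_eq_num]
      have : (n * (q.den : ℤ)) • (q • a) = q.num • (n • a) := by
        rw [hz, hz q.num, hz n, smul_smul, smul_smul]
        congr 1
        push_cast
        rw [mul_assoc, hdq]
        ring
      rw [this]
      exact zsmul_mem hna q.num
  -- get N with N • (c⁻¹) ∈ 𝒪
  have hcD : (c : D) ≠ 0 := by exact_mod_cast hcne
  obtain ⟨N, hN, hNmem⟩ := hdenom ((c : D)⁻¹)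
  set b : 𝒪 := ⟨N • (c : D)⁻¹, hNmem⟩ with hb
  -- Step 3: N • x ∈ 𝔞 for all x
  have hkey : ∀ x : 𝒪, N • x ∈ 𝔞 := by
    intro x
    have heq : N • x = x * b * c := by
      apply Subtype.ext
      push_cast
      show N • (x : D) = (x : D) * (N • (c : D)⁻¹) * c
      rw [mul_smul_comm, smul_mul_assoc]
      rw [mul_assoc, inv_mul_cancel₀ hcD, mul_one]
    rw [heq]
    exact 𝔞.mul_mem_left _ _ hc𝔞
  refine ⟨?_, ?_, N, hN, hkey⟩
  · intro h
    rw [h] at hc𝔞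
    exact hcne hc𝔞
  · -- finiteness of the quotient
    set I := TwoSidedIdeal.asIdeal 𝔞 with hI
    have hfsurj : Function.Surjective ((I.mkQ).restrictScalars ℤ) :=
      Submodule.mkQ_surjective I
    have : Module.Finite ℤ (𝒪 ⧸ I) :=
      Module.Finite.of_surjective ((I.mkQ).restrictScalars ℤ) hfsurj
    apply Module.finite_of_fg_torsion
    intro z
    obtain ⟨y, rfl⟩ := hfsurj z
    refine ⟨⟨N, mem_nonZeroDivisors_of_ne_zero (by omega)⟩, ?_⟩
    show N • ((I.mkQ).restrictScalars ℤ y) = 0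
    rw [← map_zsmul]
    have : N • y ∈ I := TwoSidedIdeal.mem_asIdeal.mpr (hkey y)
    exact (Submodule.Quotient.mk_eq_zero I).mpr this
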